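/- Let n ∈ ℕ and let E and E' be linear subspaces of ℝ^n such that ‖Π_E Π_{(E')^⊥}‖₂ < 1, where ‖·‖₂ is the operator (spectral) norm. Then there exists a linear subspace Ẽ ⊆ E' with dim Ẽ = dim E such that ‖Π_E − Π_{Ẽ}‖²_F ≤ 8·‖Π_E Π_{(E')^⊥}‖²_F. -/

import Mathlib

open MeasureTheory

/-- The standard Gaussian measure `γ_n` on `ℝ^n`: the product of `n` i.i.d. standard
Gaussians `N(0,1)`, transported to `EuclideanSpace ℝ (Fin n)`. -/
noncomputable def stdGaussian (n : ℕ) : Measure (EuclideanSpace ℝ (Fin n)) :=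
  (Measure.pi fun _ : Fin n => ProbabilityTheory.gaussianReal 0 1).map
    (MeasurableEquiv.toLp 2 (Fin n → ℝ))

/-- The orthogonal projection `Π_E` onto a subspace `E`, as a map of the ambient space. -/
noncomputable def proj {n : ℕ} (E : Submodule ℝ (EuclideanSpace ℝ (Fin n)))
    (x : EuclideanSpace ℝ (Fin n)) : EuclideanSpace ℝ (Fin n) :=
  (Submodule.orthogonalProjectionOnto E x : EuclideanSpace ℝ (Fin n))

/-- The averaging operator `A_E`: `(A_E f)(x) = ∫ f(Π_E x + Π_{E^⊥} z) dγ_n(z)`. -/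
noncomputable def avg {n : ℕ} (E : Submodule ℝ (EuclideanSpace ℝ (Fin n)))
    (f : EuclideanSpace ℝ (Fin n) → ℝ) (x : EuclideanSpace ℝ (Fin n)) : ℝ :=
  ∫ z, f (proj E x + proj Eᗮ z) ∂(stdGaussian n)

/-- The Ornstein–Uhlenbeck noise operator `P_t`:
`(P_t f)(x) = ∫ f(e^{-t} x + √(1 - e^{-2t}) y) dγ_n(y)`. -/
noncomputable def ouOp {n : ℕ} (t : ℝ) (f : EuclideanSpace ℝ (Fin n) → ℝ)
    (x : EuclideanSpace ℝ (Fin n)) : ℝ :=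
  ∫ y, f (Real.exp (-t) • x + Real.sqrt (1 - Real.exp (-2 * t)) • y) ∂(stdGaussian n)

/-- A function `f : ℝ^n → [-1,1]` is `s`-smooth if `∫ |f - P_t f| dγ_n ≤ s·√t` for all `t > 0`. -/
def SSmooth {n : ℕ} (s : ℝ) (f : EuclideanSpace ℝ (Fin n) → ℝ) : Prop :=
  ∀ t : ℝ, 0 < t → ∫ x, |f x - ouOp t f x| ∂(stdGaussian n) ≤ s * Real.sqrt t

/-- `f` is `c`-Lipschitz (with a real constant `c`). -/
def LipschitzC {E : Type*} [NormedAddCommGroup E] (c : ℝ) (f : E → ℝ) : Prop :=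
  ∀ x y, |f x - f y| ≤ c * ‖x - y‖

/-- `h : ℝ^n → ℝ` is a linear `k`-junta: it depends only on the projection onto a
subspace of dimension at most `k`. -/
def IsLinearJunta {n : ℕ} (k : ℕ) (h : EuclideanSpace ℝ (Fin n) → ℝ) : Prop :=
  ∃ F : Submodule ℝ (EuclideanSpace ℝ (Fin n)), Module.finrank ℝ F ≤ k ∧
    ∀ x z, proj F x = proj F z → h x = h z

/-- Frobenius norm of a matrix. -/
noncomputable def frobNorm {m n : ℕ} (M : Matrix (Fin m) (Fin n) ℝ) : ℝ :=
  Real.sqrt (∑ i, ∑ j, (M i j) ^ 2)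

/-- Operator (spectral) norm of a matrix. -/
noncomputable def specNorm {m n : ℕ} (M : Matrix (Fin m) (Fin n) ℝ) : ℝ :=
  ‖LinearMap.toContinuousLinearMap (Matrix.toEuclideanLin M)‖

/-- The `n×n` matrix of the orthogonal projection onto `E`. -/
noncomputable def projMatrix {n : ℕ} (E : Submodule ℝ (EuclideanSpace ℝ (Fin n))) :
    Matrix (Fin n) (Fin n) ℝ :=
  Matrix.of fun i j => proj E (EuclideanSpace.single j (1 : ℝ)) i

/-- View a vector of `ℝ^n` as a plain function `Fin n → ℝ`. -/
noncomputable def toPi {n : ℕ} (x : EuclideanSpace ℝ (Fin n)) : Fin n → ℝ := fun i => x i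

/-- View a plain function `Fin n → ℝ` as a vector of `ℝ^n`. -/
noncomputable def ofPi {n : ℕ} (v : Fin n → ℝ) : EuclideanSpace ℝ (Fin n) :=
  (EuclideanSpace.equiv (Fin n) ℝ).symm v


namespace SD
open RealInnerProductSpace Matrix
variable {n : ℕ}

noncomputable def projL (E : Submodule ℝ (EuclideanSpace ℝ (Fin n))) :
    EuclideanSpace ℝ (Fin n) →ₗ[ℝ] EuclideanSpace ℝ (Fin n) :=
  E.subtype ∘ₗ (Submodule.orthogonalProjectionOnto E).toLinearMap

lemma proj_eq_projL (E : Submodule ℝ (EuclideanSpace ℝ (Fin n))) (x : EuclideanSpace ℝ (Fin n)) :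
    proj E x = projL E x := rfl

lemma euclid_decomp (x : EuclideanSpace ℝ (Fin n)) :
    x = ∑ j, x j • EuclideanSpace.single j (1:ℝ) := by
  ext i
  rw [WithLp.ofLp_sum, Finset.sum_apply]
  simp [EuclideanSpace.single_apply]

lemma mulVec_proj (E : Submodule ℝ (EuclideanSpace ℝ (Fin n))) (x : EuclideanSpace ℝ (Fin n)) :
    Matrix.mulVec (projMatrix E) (fun i => x i) = fun i => proj E x i := by
  funext i
  have hx : proj E x i = ∑ j, x j * proj E (EuclideanSpace.single j (1:ℝ)) i := by
    conv_lhs => rw [proj_eq_projL, euclid_decomp x]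
    rw [map_sum, WithLp.ofLp_sum, Finset.sum_apply]
    simp [proj_eq_projL]
  rw [Matrix.mulVec, dotProduct]
  simp only [projMatrix, Matrix.of_apply]
  rw [hx]
  congr 1; funext j; ring

lemma proj_normSq (v : EuclideanSpace ℝ (Fin n)) : ∑ i, (v i)^2 = ‖v‖^2 := by
  rw [EuclideanSpace.norm_eq, Real.sq_sqrt (by positivity)]
  simp [sq_abs]

lemma inner_eq_sum (x y : EuclideanSpace ℝ (Fin n)) : ⟪x, y⟫ = ∑ i, x i * y i := by
  simp [PiLp.inner_apply, RCLike.inner_apply, mul_comm]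

lemma projMatrix_apply (E : Submodule ℝ (EuclideanSpace ℝ (Fin n))) (i j : Fin n) :
    projMatrix E i j = proj E (EuclideanSpace.single j (1:ℝ)) i := rfl

lemma projMatrix_symm (E : Submodule ℝ (EuclideanSpace ℝ (Fin n))) :
    (projMatrix E)ᵀ = projMatrix E := by
  ext i j
  rw [Matrix.transpose_apply, projMatrix_apply, projMatrix_apply]
  have h1 : proj E (EuclideanSpace.single i (1:ℝ)) j
      = ⟪proj E (EuclideanSpace.single i (1:ℝ)), EuclideanSpace.single j (1:ℝ)⟫ := by
    rw [inner_eq_sum]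
    simp [EuclideanSpace.single_apply]
  have h2 : proj E (EuclideanSpace.single j (1:ℝ)) i
      = ⟪EuclideanSpace.single i (1:ℝ), proj E (EuclideanSpace.single j (1:ℝ))⟫ := by
    rw [inner_eq_sum]
    simp [EuclideanSpace.single_apply]
  rw [h1, h2]
  exact Submodule.inner_starProjection_left_eq_right E _ _

lemma projMatrix_mul (E F : Submodule ℝ (EuclideanSpace ℝ (Fin n))) (i j : Fin n) :
    (projMatrix E * projMatrix F) i j = proj E (proj F (EuclideanSpace.single j (1:ℝ))) i := by
  have : (projMatrix E * projMatrix F) i j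
      = Matrix.mulVec (projMatrix E) (fun k => proj F (EuclideanSpace.single j (1:ℝ)) k) i := by
    rw [Matrix.mulVec, dotProduct, Matrix.mul_apply]
    rfl
  rw [this, mulVec_proj]

lemma projMatrix_idem (E : Submodule ℝ (EuclideanSpace ℝ (Fin n))) :
    projMatrix E * projMatrix E = projMatrix E := by
  ext i j
  rw [projMatrix_mul, projMatrix_apply]
  have : proj E (proj E (EuclideanSpace.single j (1:ℝ))) = proj E (EuclideanSpace.single j (1:ℝ)) := by
    rw [proj, proj, Submodule.orthogonalProjectionOnto_mem_subspace_eq_self]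
  rw [this]

lemma projMatrix_orthogonal (E : Submodule ℝ (EuclideanSpace ℝ (Fin n))) :
    projMatrix Eᗮ = 1 - projMatrix E := by
  ext i j
  rw [Matrix.sub_apply, projMatrix_apply, projMatrix_apply]
  rw [proj, Submodule.coe_orthogonalProjectionOnto_apply, Submodule.starProjection_orthogonal_val]
  simp [Matrix.one_apply, EuclideanSpace.single_apply, proj, eq_comm, Matrix.sub_apply]

noncomputable def frobSq {m : ℕ} (M : Matrix (Fin m) (Fin n) ℝ) : ℝ := ∑ i, ∑ j, (M i j)^2

lemma frobNorm_sq {m : ℕ} (M : Matrix (Fin m) (Fin n) ℝ) : frobNorm M ^ 2 = frobSq M := by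
  rw [frobNorm, Real.sq_sqrt (by positivity)]; rfl

lemma frobSq_transpose (M : Matrix (Fin n) (Fin n) ℝ) : frobSq Mᵀ = frobSq M := by
  rw [frobSq, frobSq, Finset.sum_comm]
  rfl

lemma frobSq_eq_trace (M : Matrix (Fin n) (Fin n) ℝ) : frobSq M = Matrix.trace (Mᵀ * M) := by
  rw [Matrix.trace, frobSq, Finset.sum_comm]
  congr 1; funext j
  rw [Matrix.diag_apply, Matrix.mul_apply]
  congr 1; funext i
  rw [Matrix.transpose_apply]; ring

lemma trace_projMatrix (E : Submodule ℝ (EuclideanSpace ℝ (Fin n))) :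
    Matrix.trace (projMatrix E) = Module.finrank ℝ E := by
  classical
  have b := stdOrthonormalBasis ℝ E
  have hb : ∀ x, proj E x = ∑ i, ⟪(b i : EuclideanSpace ℝ (Fin n)), x⟫ • (b i : EuclideanSpace ℝ (Fin n)) := by
    intro x
    rw [proj, b.orthogonalProjectionOnto_apply_eq_sum]
    push_cast
    rfl
  rw [Matrix.trace]
  have : ∀ j, Matrix.diag (projMatrix E) j
      = ∑ i, ((b i : EuclideanSpace ℝ (Fin n)) j)^2 := by
    intro j
    rw [Matrix.diag_apply, projMatrix_apply, hb, WithLp.ofLp_sum, Finset.sum_apply]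
    congr 1; funext i
    rw [PiLp.smul_apply, inner_eq_sum]
    simp [EuclideanSpace.single_apply, sq, smul_eq_mul]
  rw [Finset.sum_congr rfl (fun j _ => this j), Finset.sum_comm]
  have : ∀ i, ∑ j, ((b i : EuclideanSpace ℝ (Fin n)) j)^2 = 1 := by
    intro i
    rw [proj_normSq]
    have := b.orthonormal.1 i
    rw [Submodule.norm_coe, this]
    norm_num
  rw [Finset.sum_congr rfl (fun i _ => this i)]
  simp

lemma key_alg (P R : Matrix (Fin n) (Fin n) ℝ) (hPs : Pᵀ = P) (hRs : Rᵀ = R)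
    (hP2 : P*P = P) (hR2 : R*R = R) (htr : P.trace = R.trace) :
    frobSq (P - R) = 2 * frobSq ((1 - R) * P) := by
  rw [frobSq_eq_trace, frobSq_eq_trace]
  have t1 : (P - R)ᵀ = P - R := by rw [Matrix.transpose_sub, hPs, hRs]
  have t2 : ((1 - R) * P)ᵀ = P * (1 - R) := by
    rw [Matrix.transpose_mul, Matrix.transpose_sub, Matrix.transpose_one, hRs, hPs]
  rw [t1, t2]
  have h1 : (1 - R) * (1 - R) = 1 - R := by
    calc (1 - R) * (1 - R) = 1 - R - R + R*R := by noncomm_ring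
      _ = 1 - R := by rw [hR2]; abel
  have e2 : (P * (1 - R)) * ((1 - R) * P) = P * P - P * (R * P) := by
    calc (P * (1 - R)) * ((1 - R) * P) = P * ((1 - R) * (1 - R)) * P := by noncomm_ring
      _ = P * (1 - R) * P := by rw [h1]
      _ = P * P - P * (R * P) := by noncomm_ring
  have e1 : (P - R) * (P - R) = P*P - P*R - R*P + R*R := by noncomm_ring
  rw [e1, e2, hP2, hR2]
  have c1 : (R * P).trace = (P * R).trace := Matrix.trace_mul_comm R P
  have c2 : (P * (R * P)).trace = (P * R).trace := by
    rw [Matrix.trace_mul_comm P (R * P), Matrix.mul_assoc, Matrix.trace_mul_comm R (P * P), hP2,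
      Matrix.trace_mul_comm P R, Matrix.trace_mul_comm R P]
  rw [Matrix.trace_add, Matrix.trace_sub, Matrix.trace_sub, Matrix.trace_sub, c1, c2, htr]
  ring

lemma frobSq_projMul (F E : Submodule ℝ (EuclideanSpace ℝ (Fin n))) :
    frobSq (projMatrix F * projMatrix E)
      = ∑ j, ‖proj F (proj E (EuclideanSpace.single j (1:ℝ)))‖^2 := by
  rw [frobSq, Finset.sum_comm]
  congr 1; funext j
  rw [← proj_normSq]
  congr 1; funext i
  rw [projMatrix_mul]

lemma dist_sq_le (K : Submodule ℝ (EuclideanSpace ℝ (Fin n))) (u w : EuclideanSpace ℝ (Fin n))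
    (hw : w ∈ K) : ‖u - proj K u‖^2 ≤ ‖u - w‖^2 := by
  have hdec : u - w = (u - proj K u) + (proj K u - w) := by rw [proj]; abel
  have hmem : proj K u - w ∈ K := K.sub_mem (Submodule.orthogonalProjectionOnto K u).2 hw
  have horth : u - proj K u ∈ Kᗮ := Submodule.sub_starProjection_mem_orthogonal u
  have ho : ⟪u - proj K u, proj K u - w⟫ = 0 := by
    rw [real_inner_comm]
    exact horth _ hmem
  have := norm_add_sq_real (u - proj K u) (proj K u - w)
  rw [hdec, this, ho]
  nlinarith [sq_nonneg ‖proj K u - w‖]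

lemma toEuclideanLin_projMul (E F : Submodule ℝ (EuclideanSpace ℝ (Fin n)))
    (x : EuclideanSpace ℝ (Fin n)) :
    Matrix.toEuclideanLin (projMatrix E * projMatrix F) x = proj E (proj F x) := by
  rw [Matrix.toEuclideanLin_apply, ← Matrix.mulVec_mulVec]
  have hx : x.ofLp = fun i => x i := rfl
  rw [hx, mulVec_proj, mulVec_proj]

lemma norm_le_specNorm (E F : Submodule ℝ (EuclideanSpace ℝ (Fin n)))
    (x : EuclideanSpace ℝ (Fin n)) :
    ‖proj E (proj F x)‖ ≤ specNorm (projMatrix E * projMatrix F) * ‖x‖ := by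
  rw [← toEuclideanLin_projMul]
  have := (LinearMap.toContinuousLinearMap
    (Matrix.toEuclideanLin (projMatrix E * projMatrix F))).le_opNorm x
  rwa [LinearMap.coe_toContinuousLinearMap'] at this

lemma finrank_map_eq (E E' : Submodule ℝ (EuclideanSpace ℝ (Fin n)))
    (hle : specNorm (projMatrix E * projMatrix E'ᗮ) < 1) :
    Module.finrank ℝ (E.map (projL E')) = Module.finrank ℝ E := by
  have hker : LinearMap.ker ((projL E').domRestrict E) = ⊥ := by
    rw [LinearMap.ker_eq_bot']
    rintro ⟨x, hx⟩ h0
    have hfx : (Submodule.orthogonalProjectionOnto E' x : EuclideanSpace ℝ (Fin n)) = 0 := by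
      simpa [projL, LinearMap.domRestrict_apply] using h0
    have h1 : proj E'ᗮ x = x := by
      rw [proj, Submodule.coe_orthogonalProjectionOnto_apply, Submodule.starProjection_orthogonal_val,
        ← Submodule.coe_orthogonalProjectionOnto_apply, hfx, sub_zero]
    have h2 : proj E x = x := Submodule.starProjection_eq_self_iff.mpr hx
    have h3 : ‖x‖ ≤ specNorm (projMatrix E * projMatrix E'ᗮ) * ‖x‖ := by
      have := norm_le_specNorm E E'ᗮ x
      rwa [h1, h2] at this
    have hx0 : x = 0 := by
      by_contra hne
      have : (0:ℝ) < ‖x‖ := norm_pos_iff.mpr hne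
      nlinarith
    exact Subtype.ext hx0
  have h := LinearMap.finrank_range_add_finrank_ker ((projL E').domRestrict E)
  rw [LinearMap.range_domRestrict, hker, finrank_bot] at h
  omega

theorem subspace_distance' (E E' : Submodule ℝ (EuclideanSpace ℝ (Fin n)))
    (hle : specNorm (projMatrix E * projMatrix E'ᗮ) < 1) :
    ∃ Et : Submodule ℝ (EuclideanSpace ℝ (Fin n)), Et ≤ E' ∧
      Module.finrank ℝ Et = Module.finrank ℝ E ∧
      frobNorm (projMatrix E - projMatrix Et) ^ 2
        ≤ 8 * frobNorm (projMatrix E * projMatrix E'ᗮ) ^ 2 := by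
  refine ⟨E.map (projL E'), ?_, finrank_map_eq E E' hle, ?_⟩
  · rintro y ⟨x, -, rfl⟩
    exact (Submodule.orthogonalProjectionOnto E' x).2
  set Et := E.map (projL E') with hEt
  have hdim : Module.finrank ℝ Et = Module.finrank ℝ E := finrank_map_eq E E' hle
  have htr : (projMatrix E).trace = (projMatrix Et).trace := by
    rw [trace_projMatrix, trace_projMatrix, hdim]
  have halg := key_alg (projMatrix E) (projMatrix Et) (projMatrix_symm E) (projMatrix_symm Et)
    (projMatrix_idem E) (projMatrix_idem Et) htr
  rw [← projMatrix_orthogonal Et] at halg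
  have hcol : frobSq (projMatrix Etᗮ * projMatrix E) ≤ frobSq (projMatrix E'ᗮ * projMatrix E) := by
    rw [frobSq_projMul, frobSq_projMul]
    apply Finset.sum_le_sum
    intro j _
    set u := proj E (EuclideanSpace.single j (1:ℝ)) with hu
    have humem : u ∈ E := (Submodule.orthogonalProjectionOnto E _).2
    have hw : proj E' u ∈ Et := ⟨u, humem, rfl⟩
    have h1 : proj Etᗮ u = u - proj Et u := by
      rw [proj, Submodule.coe_orthogonalProjectionOnto_apply, Submodule.starProjection_orthogonal_val]; rfl
    have h2 : proj E'ᗮ u = u - proj E' u := by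
      rw [proj, Submodule.coe_orthogonalProjectionOnto_apply, Submodule.starProjection_orthogonal_val]; rfl
    rw [h1, h2]
    exact dist_sq_le Et u (proj E' u) hw
  have htrans : frobSq (projMatrix E'ᗮ * projMatrix E) = frobSq (projMatrix E * projMatrix E'ᗮ) := by
    rw [← frobSq_transpose (projMatrix E * projMatrix E'ᗮ), Matrix.transpose_mul,
      projMatrix_symm, projMatrix_symm]
  have hnn : 0 ≤ frobSq (projMatrix E * projMatrix E'ᗮ) := by
    rw [frobSq]; positivity
  rw [frobNorm_sq, frobNorm_sq, halg]
  linarith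

end SD

/-- if `‖Π_E Π_{(E')^⊥}‖₂ < 1`, then `E'` contains a subspace `Ẽ` of the
same dimension as `E` with `‖Π_E − Π_Ẽ‖²_F ≤ 8·‖Π_E Π_{(E')^⊥}‖²_F`. -/
theorem subspace_distance {n : ℕ} (E E' : Submodule ℝ (EuclideanSpace ℝ (Fin n)))
    (hle : specNorm (projMatrix E * projMatrix E'ᗮ) < 1) :
    ∃ Et : Submodule ℝ (EuclideanSpace ℝ (Fin n)), Et ≤ E' ∧
      Module.finrank ℝ Et = Module.finrank ℝ E ∧
      frobNorm (projMatrix E - projMatrix Et) ^ 2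
        ≤ 8 * frobNorm (projMatrix E * projMatrix E'ᗮ) ^ 2 := by
  exact SD.subspace_distance' E E' hle
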